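/- arXiv:2604.25320 — 2 statements merged into one kernel-verified Lean document; each statement's English description precedes it below -/
import Mathlib

section
/- Let (f_n)_{n≥1} be a sequence of nonconstant holomorphic self-maps of the unit disk 𝔻, and suppose the forward iterates F_n := f_n ∘ ⋯ ∘ f_1 converge locally uniformly on 𝔻 to a holomorphic self-map F of 𝔻. Then F is nonconstant if and only if for every a ∈ 𝔻 the series Σ_{n≥1} (1 − D_h f_n(a)) converges, and this in turn holds if and only if the series converges for some a ∈ 𝔻. -/
open Filter Metric Set

noncomputable section

/-- The open unit disk in the complex plane. -/
def unitDisk : Set ℂ := Metric.ball (0 : ℂ) 1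

/-- A holomorphic self-map of the unit disk. -/
def IsHolSelfMap (f : ℂ → ℂ) : Prop :=
  DifferentiableOn ℂ f unitDisk ∧ Set.MapsTo f unitDisk unitDisk

/-- The hyperbolic distortion `D_h f (z) = (1 - |z|²)|f′(z)| / (1 - |f(z)|²)`. -/
def hypDist (f : ℂ → ℂ) (z : ℂ) : ℝ :=
  (1 - ‖z‖ ^ 2) * ‖deriv f z‖ / (1 - ‖f z‖ ^ 2)

/-- Compatibility: the complex absolute value as an `AbsoluteValue`. -/
def Complex.abs : AbsoluteValue ℂ ℝ := NormedField.toAbsoluteValue ℂ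

lemma Complex.norm_eq_abs (z : ℂ) : ‖z‖ = Complex.abs z := rfl

lemma Complex.abs.pos {z : ℂ} (h : z ≠ 0) : 0 < Complex.abs z := norm_pos_iff.mpr h

lemma Complex.normSq_eq_abs (z : ℂ) : Complex.normSq z = Complex.abs z ^ 2 :=
  Complex.normSq_eq_norm_sq z

lemma Complex.abs_conj (z : ℂ) : Complex.abs ((starRingEnd ℂ) z) = Complex.abs z :=
  Complex.norm_conj z

lemma Complex.abs_ofReal (r : ℝ) : Complex.abs (r : ℂ) = |r| := by
  rw [← Complex.norm_eq_abs, Complex.norm_real, Real.norm_eq_abs]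

lemma Complex.abs_two : Complex.abs 2 = 2 := Complex.norm_two

lemma Complex.continuous_abs : Continuous Complex.abs := continuous_norm

lemma Complex.abs_le_abs_of_mapsTo_ball_self {g : ℂ → ℂ} {R : ℝ} {z : ℂ}
    (hd : DifferentiableOn ℂ g (Metric.ball 0 R))
    (h_maps : Set.MapsTo g (Metric.ball 0 R) (Metric.ball 0 R)) (h₀ : g 0 = 0)
    (hz : Complex.abs z < R) : Complex.abs (g z) ≤ Complex.abs z :=
  Complex.norm_le_norm_of_mapsTo_ball hd (h_maps.mono_right Metric.ball_subset_closedBall) h₀ hz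

lemma hypDist_abs (f : ℂ → ℂ) (z : ℂ) : hypDist f z =
    (1 - Complex.abs z ^ 2) * Complex.abs (deriv f z) / (1 - Complex.abs (f z) ^ 2) := rfl

open Complex Topology

lemma mem_unitDisk {z : ℂ} : z ∈ unitDisk ↔ Complex.abs z < 1 := by
  simp [unitDisk, mem_ball_zero_iff, Complex.norm_eq_abs]

lemma isOpen_unitDisk : IsOpen unitDisk := isOpen_ball

lemma key_identity (a z : ℂ) :
    Complex.abs (1 - (starRingEnd ℂ) a * z) ^ 2 - Complex.abs (a - z) ^ 2
      = (1 - Complex.abs a ^ 2) * (1 - Complex.abs z ^ 2) := by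
  rw [← Complex.normSq_eq_abs, ← Complex.normSq_eq_abs, ← Complex.normSq_eq_abs,
    ← Complex.normSq_eq_abs]
  simp only [Complex.normSq_apply, Complex.sub_re, Complex.sub_im, Complex.mul_re,
    Complex.mul_im, Complex.one_re, Complex.one_im, Complex.conj_re, Complex.conj_im]
  ring

lemma abs_sub_lt_abs_one_sub {a z : ℂ} (ha : Complex.abs a < 1) (hz : Complex.abs z < 1) :
    Complex.abs (a - z) < Complex.abs (1 - (starRingEnd ℂ) a * z) := by
  have h := key_identity a z
  have h1 : 0 < 1 - Complex.abs a ^ 2 := by nlinarith [Complex.abs.nonneg a]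
  have h2 : 0 < 1 - Complex.abs z ^ 2 := by nlinarith [Complex.abs.nonneg z]
  nlinarith [Complex.abs.nonneg (a - z), Complex.abs.nonneg (1 - (starRingEnd ℂ) a * z)]

lemma one_sub_conj_mul_ne {a z : ℂ} (ha : Complex.abs a < 1) (hz : Complex.abs z < 1) :
    (1 : ℂ) - (starRingEnd ℂ) a * z ≠ 0 := by
  intro h
  have h2 := abs_sub_lt_abs_one_sub ha hz
  rw [h] at h2
  simp at h2
  exact absurd h2 (not_lt.2 (Complex.abs.nonneg _))

lemma abs_one_sub_conj_comm (u v : ℂ) :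
    Complex.abs (1 - (starRingEnd ℂ) u * v) = Complex.abs (1 - (starRingEnd ℂ) v * u) := by
  rw [← Complex.abs_conj (1 - (starRingEnd ℂ) v * u)]
  congr 1
  simp only [map_sub, map_one, map_mul, Complex.conj_conj]
  ring

def moeb (a z : ℂ) : ℂ := (a - z) / (1 - (starRingEnd ℂ) a * z)

lemma moeb_mem {a z : ℂ} (ha : Complex.abs a < 1) (hz : Complex.abs z < 1) :
    Complex.abs (moeb a z) < 1 := by
  rw [moeb, map_div₀, div_lt_one (Complex.abs.pos (one_sub_conj_mul_ne ha hz))]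
  exact abs_sub_lt_abs_one_sub ha hz

lemma moeb_self (a : ℂ) : moeb a a = 0 := by simp [moeb]

lemma moeb_zero (a : ℂ) : moeb a 0 = a := by simp [moeb]

lemma moeb_moeb {a z : ℂ} (ha : Complex.abs a < 1) (hz : Complex.abs z < 1) :
    moeb a (moeb a z) = z := by
  have h1 : (1 : ℂ) - (starRingEnd ℂ) a * z ≠ 0 := one_sub_conj_mul_ne ha hz
  have h2 : (1 : ℂ) - (starRingEnd ℂ) a * a ≠ 0 := one_sub_conj_mul_ne ha ha
  rw [moeb, moeb]
  have h3 : (1 : ℂ) - (starRingEnd ℂ) a * ((a - z) / (1 - (starRingEnd ℂ) a * z))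
      = (1 - (starRingEnd ℂ) a * a) / (1 - (starRingEnd ℂ) a * z) := by
    field_simp
    ring
  rw [h3]
  have h1' : (1 : ℂ) - z * (starRingEnd ℂ) a ≠ 0 := by rwa [mul_comm]
  have h2' : (1 : ℂ) - a * (starRingEnd ℂ) a ≠ 0 := by rwa [mul_comm]
  field_simp
  ring

lemma moeb_differentiableAt {a z : ℂ} (h : (1 : ℂ) - (starRingEnd ℂ) a * z ≠ 0) :
    DifferentiableAt ℂ (moeb a) z := by
  apply DifferentiableAt.div
  · fun_prop
  · fun_prop
  · exact h

/-- Schwarz–Pick inequality, multiplicative form. -/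
lemma SP1 (h : ℂ → ℂ) (hd : DifferentiableOn ℂ h unitDisk)
    (hb : ∀ ζ ∈ unitDisk, Complex.abs (h ζ) ≤ 1) {z w : ℂ}
    (hz : z ∈ unitDisk) (hw : w ∈ unitDisk) :
    Complex.abs (h z - h w) * Complex.abs (1 - (starRingEnd ℂ) w * z)
      ≤ Complex.abs (z - w) * Complex.abs (1 - (starRingEnd ℂ) (h w) * h z) := by
  by_cases hc : ∃ ζ₀ ∈ unitDisk, 1 ≤ Complex.abs (h ζ₀)
  · obtain ⟨ζ₀, hζ₀, hζ₀1⟩ := hc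
    have hmax : IsMaxOn (norm ∘ h) unitDisk ζ₀ := by
      intro ζ hζ
      simp only [Function.comp_apply, Complex.norm_eq_abs]
      exact le_trans (hb ζ hζ) hζ₀1
    have := Complex.eqOn_of_isPreconnected_of_isMaxOn_norm
      (convex_ball (0:ℂ) 1).isPreconnected isOpen_ball hd hζ₀ hmax
    have hzz : h z = h ζ₀ := this hz
    have hww : h w = h ζ₀ := this hw
    rw [hzz, hww, sub_self]
    simp
    positivity
  · push_neg at hc
    have hzd := mem_unitDisk.1 hz
    have hwd := mem_unitDisk.1 hw
    have hhw : Complex.abs (h w) < 1 := hc w hw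
    have hhz : Complex.abs (h z) < 1 := hc z hz
    set k : ℂ → ℂ := fun ζ => moeb (h w) (h (moeb w ζ)) with hk
    have hdiffAt : ∀ ζ ∈ unitDisk, DifferentiableAt ℂ h ζ :=
      fun ζ hζ => hd.differentiableAt (isOpen_unitDisk.mem_nhds hζ)
    have hkd : DifferentiableOn ℂ k unitDisk := by
      intro ζ hζ
      have hζd := mem_unitDisk.1 hζ
      have h1 : Complex.abs (moeb w ζ) < 1 := moeb_mem hwd hζd
      have h2 : Complex.abs (h (moeb w ζ)) < 1 := hc _ (mem_unitDisk.2 h1)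
      exact (((moeb_differentiableAt (one_sub_conj_mul_ne hhw h2)).comp _
        (hdiffAt _ (mem_unitDisk.2 h1))).comp ζ
        (moeb_differentiableAt (one_sub_conj_mul_ne hwd hζd))).differentiableWithinAt
    have hkm : MapsTo k unitDisk unitDisk := by
      intro ζ hζ
      have hζd := mem_unitDisk.1 hζ
      exact mem_unitDisk.2 (moeb_mem hhw (hc _ (mem_unitDisk.2 (moeb_mem hwd hζd))))
    have hk0 : k 0 = 0 := by
      rw [hk]
      simp only [moeb_zero]
      exact moeb_self (h w)
    have hsch : ∀ ζ, Complex.abs ζ < 1 → Complex.abs (k ζ) ≤ Complex.abs ζ := by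
      intro ζ hζ
      exact Complex.abs_le_abs_of_mapsTo_ball_self hkd hkm hk0 hζ
    have happ := hsch (moeb w z) (moeb_mem hwd hzd)
    have hkv : k (moeb w z) = moeb (h w) (h z) := by
      rw [hk]
      simp only [moeb_moeb hwd hzd]
    rw [hkv] at happ
    rw [moeb, moeb, map_div₀, map_div₀] at happ
    rw [div_le_div_iff₀ (Complex.abs.pos (one_sub_conj_mul_ne hhw hhz))
      (Complex.abs.pos (one_sub_conj_mul_ne hwd hzd))] at happ
    calc Complex.abs (h z - h w) * Complex.abs (1 - (starRingEnd ℂ) w * z)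
        = Complex.abs (h w - h z) * Complex.abs (1 - (starRingEnd ℂ) w * z) := by
          rw [Complex.abs.map_sub (h z) (h w)]
      _ ≤ Complex.abs (w - z) * Complex.abs (1 - (starRingEnd ℂ) (h w) * h z) := happ
      _ = Complex.abs (z - w) * Complex.abs (1 - (starRingEnd ℂ) (h w) * h z) := by
          rw [Complex.abs.map_sub w z]

-- appended to part2
def gfun (f : ℂ → ℂ) (w : ℂ) : ℂ → ℂ :=
  fun ζ => dslope f w ζ * (1 - (starRingEnd ℂ) w * ζ) / (1 - (starRingEnd ℂ) (f w) * f ζ)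

section gfun

variable {f : ℂ → ℂ} {w : ℂ}

lemma gfun_diff (hd : DifferentiableOn ℂ f unitDisk) (hm : MapsTo f unitDisk unitDisk)
    (hw : w ∈ unitDisk) : DifferentiableOn ℂ (gfun f w) unitDisk := by
  have h1 : DifferentiableOn ℂ (dslope f w) unitDisk :=
    (Complex.differentiableOn_dslope (isOpen_unitDisk.mem_nhds hw)).2 hd
  apply DifferentiableOn.div
  · exact h1.mul (by fun_prop)
  · apply DifferentiableOn.sub (differentiableOn_const _)
    exact (differentiableOn_const _).mul hd
  · intro ζ hζ
    exact one_sub_conj_mul_ne (mem_unitDisk.1 (hm hw)) (mem_unitDisk.1 (hm hζ))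

lemma gfun_abs_eq {ζ : ℂ} (hne : ζ ≠ w) :
    Complex.abs (gfun f w ζ)
      = Complex.abs (f ζ - f w) * Complex.abs (1 - (starRingEnd ℂ) w * ζ)
        / (Complex.abs (ζ - w) * Complex.abs (1 - (starRingEnd ℂ) (f w) * f ζ)) := by
  rw [gfun, dslope_of_ne _ hne, slope_def_field]
  rw [map_div₀, map_mul, map_div₀]
  ring

lemma gfun_abs_le (hd : DifferentiableOn ℂ f unitDisk) (hm : MapsTo f unitDisk unitDisk)
    (hw : w ∈ unitDisk) : ∀ ζ ∈ unitDisk, Complex.abs (gfun f w ζ) ≤ 1 := by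
  have hb : ∀ ζ ∈ unitDisk, Complex.abs (f ζ) ≤ 1 :=
    fun ζ hζ => (mem_unitDisk.1 (hm hζ)).le
  have hoff : ∀ ζ ∈ unitDisk, ζ ≠ w → Complex.abs (gfun f w ζ) ≤ 1 := by
    intro ζ hζ hne
    have hpos : 0 < Complex.abs (ζ - w) * Complex.abs (1 - (starRingEnd ℂ) (f w) * f ζ) :=
      mul_pos (Complex.abs.pos (sub_ne_zero.2 hne))
        (Complex.abs.pos (one_sub_conj_mul_ne (mem_unitDisk.1 (hm hw))
          (mem_unitDisk.1 (hm hζ))))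
    rw [gfun_abs_eq hne, div_le_one hpos]
    exact SP1 f hd hb hζ hw
  intro ζ hζ
  rcases eq_or_ne ζ w with heq | hne
  · -- continuity argument at the base point
    rw [heq]
    have hcont : ContinuousAt (fun x => Complex.abs (gfun f w x)) w :=
      (Complex.continuous_abs.continuousAt.comp
        ((gfun_diff hd hm hw).differentiableAt
          (isOpen_unitDisk.mem_nhds hw)).continuousAt)
    have hNe : (𝓝[unitDisk \ {w}] w).NeBot := by
      have h3 : 𝓝[unitDisk \ {w}] w = 𝓝[≠] w := by
        rw [diff_eq, nhdsWithin_inter_of_mem (mem_nhdsWithin_of_mem_nhds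
          (isOpen_unitDisk.mem_nhds hw))]
      rw [h3]
      exact NormedField.nhdsNE_neBot w
    have ht : Tendsto (fun x => Complex.abs (gfun f w x)) (𝓝[unitDisk \ {w}] w)
        (𝓝 (Complex.abs (gfun f w w))) := hcont.continuousWithinAt.tendsto
    refine le_of_tendsto ht ?_
    filter_upwards [self_mem_nhdsWithin] with x hx
    exact hoff x hx.1 hx.2
  · exact hoff ζ hζ hne

lemma abs_one_sub_conj_self {u : ℂ} (hu : Complex.abs u < 1) :
    Complex.abs (1 - (starRingEnd ℂ) u * u) = 1 - Complex.abs u ^ 2 := by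
  have : (starRingEnd ℂ) u * u = (Complex.normSq u : ℂ) := by
    rw [mul_comm, Complex.mul_conj]
  rw [this]
  have : (1 : ℂ) - (Complex.normSq u : ℂ) = ((1 - Complex.normSq u : ℝ) : ℂ) := by push_cast; ring
  rw [this, Complex.abs_ofReal, Complex.normSq_eq_abs,
    _root_.abs_of_nonneg (by nlinarith [Complex.abs.nonneg u] : (0:ℝ) ≤ 1 - Complex.abs u ^ 2)]

lemma gfun_at_base (hm : MapsTo f unitDisk unitDisk) (hw : w ∈ unitDisk) :
    Complex.abs (gfun f w w) = hypDist f w := by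
  have hwd := mem_unitDisk.1 hw
  have hfwd := mem_unitDisk.1 (hm hw)
  rw [gfun, dslope_same, map_div₀, map_mul, abs_one_sub_conj_self hwd,
    abs_one_sub_conj_self hfwd, hypDist_abs]
  ring

end gfun

/-- Transfer inequality for points at bounded pseudo-hyperbolic distance. -/
lemma transferIneq {u v : ℂ} {A B : ℝ} (hu : Complex.abs u ≤ 1) (hv : Complex.abs v ≤ 1)
    (hA : 0 ≤ A) (hAB : A ≤ B)
    (hyp : Complex.abs (u - v) * B ≤ A * Complex.abs (1 - (starRingEnd ℂ) v * u)) :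
    (B - A) * (1 - Complex.abs v) ≤ (A + B) * (1 - Complex.abs u) := by
  set a := Complex.abs u with ha
  set b := Complex.abs v with hb
  set c := Complex.abs (u - v) with hc
  set Y := Complex.abs (1 - (starRingEnd ℂ) u * v) with hY
  have ha0 : 0 ≤ a := Complex.abs.nonneg u
  have hb0 : 0 ≤ b := Complex.abs.nonneg v
  have hc0 : 0 ≤ c := Complex.abs.nonneg _
  have hY0 : 0 ≤ Y := Complex.abs.nonneg _
  have hYc : Complex.abs (1 - (starRingEnd ℂ) v * u) = Y := abs_one_sub_conj_comm v u
  rw [hYc] at hyp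
  have hc2 : c ^ 2 = Y ^ 2 - (1 - a ^ 2) * (1 - b ^ 2) := by
    have hki := key_identity u v
    rw [← ha, ← hb, ← hY, ← hc] at hki
    linarith [hki]
  have hY1 : 1 - a * b ≤ Y := by
    have h1 := norm_sub_norm_le (1 : ℂ) ((starRingEnd ℂ) u * v)
    simp only [Complex.norm_eq_abs, map_one, norm_one, map_mul, Complex.abs_conj] at h1
    rw [← ha, ← hb, ← hY] at h1
    linarith [h1]
  have hab1 : a * b ≤ 1 := mul_le_one₀ hu hb0 hv
  have hkey : B * (a - b) ≤ A * (1 - a * b) := by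
    rcases le_or_gt a b with hab | hab
    · have hB0 : 0 ≤ B := le_trans hA hAB
      nlinarith
    · have habs : a * b < 1 := by nlinarith
      have hYpos : 0 < Y := by linarith
      have hP : 0 ≤ (1 - a ^ 2) * (1 - b ^ 2) :=
        mul_nonneg (by nlinarith) (by nlinarith)
      have hYsq : (1 - a * b) ^ 2 ≤ Y ^ 2 := by nlinarith
      have e1 : (c * (1 - a * b)) ^ 2
          = (Y ^ 2 - (1 - a ^ 2) * (1 - b ^ 2)) * (1 - a * b) ^ 2 := by
        rw [mul_pow, hc2]
      have e2 : ((a - b) * Y) ^ 2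
          = ((1 - a * b) ^ 2 - (1 - a ^ 2) * (1 - b ^ 2)) * Y ^ 2 := by
        rw [mul_pow]; ring
      have h1 : ((a - b) * Y) ^ 2 ≤ (c * (1 - a * b)) ^ 2 := by
        rw [e1, e2]
        nlinarith [mul_nonneg hP (by linarith [hYsq] : (0:ℝ) ≤ Y ^ 2 - (1 - a * b) ^ 2)]
      have key1 : (a - b) * Y ≤ c * (1 - a * b) := by
        have h2 := Real.sqrt_le_sqrt h1
        rwa [Real.sqrt_sq (mul_nonneg (by linarith : (0:ℝ) ≤ a - b) hY0),
          Real.sqrt_sq (mul_nonneg hc0 (by linarith : (0:ℝ) ≤ 1 - a * b))] at h2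
      have h2 : (a - b) * Y * B ≤ c * (1 - a * b) * B :=
        mul_le_mul_of_nonneg_right key1 (le_trans hA hAB)
      have h3 : c * B * (1 - a * b) ≤ A * Y * (1 - a * b) :=
        mul_le_mul_of_nonneg_right hyp (by linarith)
      have h9 : Y * (B * (a - b)) ≤ Y * (A * (1 - a * b)) := by
        ring_nf at h2 h3 ⊢
        linarith
      exact le_of_mul_le_mul_left h9 hYpos
  nlinarith [hkey, mul_nonneg hA (mul_nonneg (by linarith : (0:ℝ) ≤ 1 - a)
    (by linarith : (0:ℝ) ≤ 1 - b))]

-- SP2 and comparison lemma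
lemma one_sub_sq_pos {z : ℂ} (hz : z ∈ unitDisk) : 0 < 1 - Complex.abs z ^ 2 := by
  have := mem_unitDisk.1 hz
  nlinarith [Complex.abs.nonneg z]

lemma hypDist_nonneg {f : ℂ → ℂ} {z : ℂ} (hm : MapsTo f unitDisk unitDisk)
    (hz : z ∈ unitDisk) : 0 ≤ hypDist f z := by
  apply div_nonneg
  · exact mul_nonneg (one_sub_sq_pos hz).le (Complex.abs.nonneg _)
  · exact (one_sub_sq_pos (hm hz)).le

lemma hypDist_le_one {f : ℂ → ℂ} {z : ℂ} (hd : DifferentiableOn ℂ f unitDisk)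
    (hm : MapsTo f unitDisk unitDisk) (hz : z ∈ unitDisk) : hypDist f z ≤ 1 := by
  rw [← gfun_at_base hm hz]
  exact gfun_abs_le hd hm hz z hz

lemma gfun_abs_symm {f : ℂ → ℂ} {z w : ℂ} (hne : z ≠ w) :
    Complex.abs (gfun f w z) = Complex.abs (gfun f z w) := by
  rw [gfun_abs_eq hne, gfun_abs_eq (Ne.symm hne), Complex.abs.map_sub (f z) (f w),
    Complex.abs.map_sub z w, abs_one_sub_conj_comm w z, abs_one_sub_conj_comm (f w) (f z)]

/-- The fundamental comparison lemma for hyperbolic distortion at two points. -/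
lemma CMP {f : ℂ → ℂ} (hd : DifferentiableOn ℂ f unitDisk) (hm : MapsTo f unitDisk unitDisk)
    {z w : ℂ} (hz : z ∈ unitDisk) (hw : w ∈ unitDisk) :
    (Complex.abs (1 - (starRingEnd ℂ) w * z) - Complex.abs (z - w)) ^ 2 * (1 - hypDist f w)
      ≤ (Complex.abs (z - w) + Complex.abs (1 - (starRingEnd ℂ) w * z)) ^ 2
        * (1 - hypDist f z) := by
  rcases eq_or_ne z w with rfl | hne
  · simp
  · set A := Complex.abs (z - w) with hA
    set B := Complex.abs (1 - (starRingEnd ℂ) w * z) with hB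
    have hlt : A < B := by
      have h0 := abs_sub_lt_abs_one_sub (mem_unitDisk.1 hw) (mem_unitDisk.1 hz)
      rwa [Complex.abs.map_sub w z] at h0
    have hA0 : 0 ≤ A := Complex.abs.nonneg _
    have hBA : 0 ≤ B - A := by linarith
    have hABp : 0 ≤ A + B := by linarith
    have h1 := SP1 (gfun f w) (gfun_diff hd hm hw) (gfun_abs_le hd hm hw) hz hw
    have t1 := transferIneq (gfun_abs_le hd hm hw z hz) (gfun_abs_le hd hm hw w hw)
      hA0 hlt.le h1
    rw [gfun_at_base hm hw] at t1
    have h2 := SP1 (gfun f z) (gfun_diff hd hm hz) (gfun_abs_le hd hm hz) hz hw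
    have t2 := transferIneq (gfun_abs_le hd hm hz z hz) (gfun_abs_le hd hm hz w hw)
      hA0 hlt.le h2
    rw [gfun_at_base hm hz] at t2
    have hsym : Complex.abs (gfun f w z) = Complex.abs (gfun f z w) := gfun_abs_symm hne
    calc (B - A) ^ 2 * (1 - hypDist f w)
        = (B - A) * ((B - A) * (1 - hypDist f w)) := by ring
      _ ≤ (B - A) * ((A + B) * (1 - Complex.abs (gfun f w z))) :=
          mul_le_mul_of_nonneg_left t1 hBA
      _ = (A + B) * ((B - A) * (1 - Complex.abs (gfun f z w))) := by rw [← hsym]; ring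
      _ ≤ (A + B) * ((A + B) * (1 - hypDist f z)) :=
          mul_le_mul_of_nonneg_left t2 hABp
      _ = (A + B) ^ 2 * (1 - hypDist f z) := by ring

/-- Division form of the comparison lemma. -/
lemma CMP' {f : ℂ → ℂ} (hd : DifferentiableOn ℂ f unitDisk) (hm : MapsTo f unitDisk unitDisk)
    {z w : ℂ} (hz : z ∈ unitDisk) (hw : w ∈ unitDisk) :
    1 - hypDist f w
      ≤ ((Complex.abs (z - w) + Complex.abs (1 - (starRingEnd ℂ) w * z)) ^ 2
          / (Complex.abs (1 - (starRingEnd ℂ) w * z) - Complex.abs (z - w)) ^ 2)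
        * (1 - hypDist f z) := by
  have hlt : Complex.abs (z - w) < Complex.abs (1 - (starRingEnd ℂ) w * z) := by
    have h0 := abs_sub_lt_abs_one_sub (mem_unitDisk.1 hw) (mem_unitDisk.1 hz)
    rwa [Complex.abs.map_sub w z] at h0
  have hpos : 0 < (Complex.abs (1 - (starRingEnd ℂ) w * z) - Complex.abs (z - w)) ^ 2 := by
    have : 0 < Complex.abs (1 - (starRingEnd ℂ) w * z) - Complex.abs (z - w) := by linarith
    positivity
  rw [div_mul_eq_mul_div, le_div_iff₀ hpos]
  have h := CMP hd hm hz hw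
  nlinarith [h]

-- real analysis helpers
lemma neg_log_le_two_mul {x : ℝ} (h1 : 1/2 ≤ x) (h2 : x ≤ 1) :
    -Real.log x ≤ 2 * (1 - x) := by
  have hx0 : 0 < x := by linarith
  have key : Real.exp (2 * (x - 1)) ≤ x := by
    have hepos := Real.exp_pos (2 * (1 - x))
    have h6 : 1 ≤ x * Real.exp (2 * (1 - x)) := by
      nlinarith [Real.add_one_le_exp (2 * (1 - x))]
    have h7 : Real.exp (2 * (x - 1)) * Real.exp (2 * (1 - x)) = 1 := by
      rw [← Real.exp_add, show 2 * (x - 1) + 2 * (1 - x) = 0 by ring, Real.exp_zero]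
    nlinarith [hepos, h6, h7]
  have := (Real.le_log_iff_exp_le hx0).2 key
  linarith

lemma prod_range_le_of_le_one {D : ℕ → ℝ} (h0 : ∀ n, 0 ≤ D n) (h1 : ∀ n, D n ≤ 1)
    {n m : ℕ} (hnm : n ≤ m) :
    ∏ k ∈ Finset.range m, D k ≤ ∏ k ∈ Finset.range n, D k := by
  induction m, hnm using Nat.le_induction with
  | base => exact le_refl _
  | succ m hnm ih =>
    rw [Finset.prod_range_succ]
    have hP0 : 0 ≤ ∏ k ∈ Finset.range m, D k := Finset.prod_nonneg (fun k _ => h0 k)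
    calc (∏ k ∈ Finset.range m, D k) * D m ≤ (∏ k ∈ Finset.range m, D k) * 1 :=
          mul_le_mul_of_nonneg_left (h1 m) hP0
      _ = ∏ k ∈ Finset.range m, D k := mul_one _
      _ ≤ ∏ k ∈ Finset.range n, D k := ih

lemma le_prod_of_tendsto {D : ℕ → ℝ} (h0 : ∀ n, 0 ≤ D n) (h1 : ∀ n, D n ≤ 1) {L : ℝ}
    (hL : Tendsto (fun n => ∏ k ∈ Finset.range n, D k) atTop (𝓝 L)) (n : ℕ) :
    L ≤ ∏ k ∈ Finset.range n, D k := by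
  apply le_of_tendsto hL
  filter_upwards [eventually_ge_atTop n] with m hm
  exact prod_range_le_of_le_one h0 h1 hm

/-- If the partial products converge to a positive limit, the series `∑ (1 - D n)` converges. -/
lemma summable_of_prodlim_pos {D : ℕ → ℝ} (h0 : ∀ n, 0 ≤ D n) (h1 : ∀ n, D n ≤ 1) {L : ℝ}
    (hL : Tendsto (fun n => ∏ k ∈ Finset.range n, D k) atTop (𝓝 L)) (hLpos : 0 < L) :
    Summable (fun n => 1 - D n) := by
  have hPge : ∀ n, L ≤ ∏ k ∈ Finset.range n, D k := le_prod_of_tendsto h0 h1 hL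
  have hDpos : ∀ k, 0 < D k := by
    intro k
    rcases lt_or_eq_of_le (h0 k) with h | h
    · exact h
    · exfalso
      have : (∏ j ∈ Finset.range (k + 1), D j) = 0 :=
        Finset.prod_eq_zero (Finset.self_mem_range_succ k) h.symm
      have h2 := hPge (k + 1)
      rw [this] at h2
      linarith
  apply summable_of_sum_range_le (c := -Real.log L)
  · intro n; linarith [h1 n]
  · intro n
    have hlog : Real.log (∏ k ∈ Finset.range n, D k)
        = ∑ k ∈ Finset.range n, Real.log (D k) :=
      Real.log_prod (fun k _ => (hDpos k).ne')
    have h2 : ∑ k ∈ Finset.range n, (1 - D k)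
        ≤ ∑ k ∈ Finset.range n, (-Real.log (D k)) := by
      apply Finset.sum_le_sum
      intro k _
      linarith [Real.log_le_sub_one_of_pos (hDpos k)]
    have h3 : Real.log L ≤ Real.log (∏ k ∈ Finset.range n, D k) :=
      Real.log_le_log hLpos (hPge n)
    calc ∑ k ∈ Finset.range n, (1 - D k)
        ≤ ∑ k ∈ Finset.range n, (-Real.log (D k)) := h2
      _ = -Real.log (∏ k ∈ Finset.range n, D k) := by
          rw [hlog, Finset.sum_neg_distrib]
      _ ≤ -Real.log L := by linarith
/-- If all `D n` are positive and `∑ (1 - D n)` converges, the limit of partial products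
is positive. -/
lemma prodlim_pos_of_summable {D : ℕ → ℝ} (h0 : ∀ n, 0 < D n) (h1 : ∀ n, D n ≤ 1)
    (hs : Summable (fun n => 1 - D n)) {L : ℝ}
    (hL : Tendsto (fun n => ∏ k ∈ Finset.range n, D k) atTop (𝓝 L)) : 0 < L := by
  have ht0 : ∀ n, 0 ≤ 1 - D n := fun n => by linarith [h1 n]
  have htend : Tendsto (fun n => 1 - D n) atTop (𝓝 0) := hs.tendsto_atTop_zero
  obtain ⟨N, hN⟩ := eventually_atTop.1 (htend.eventually_lt_const (by norm_num : (0:ℝ) < 1/2))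
  set M := (∑ k ∈ Finset.range N, (-Real.log (D k))) + 2 * (∑' n, (1 - D n)) with hM
  have hlognn : ∀ k, 0 ≤ -Real.log (D k) := by
    intro k
    have := Real.log_nonpos (h0 k).le (h1 k)
    linarith
  have hbound : ∀ n, -Real.log (∏ k ∈ Finset.range n, D k) ≤ M := by
    intro n
    have hlog : Real.log (∏ k ∈ Finset.range n, D k)
        = ∑ k ∈ Finset.range n, Real.log (D k) :=
      Real.log_prod (fun k _ => (h0 k).ne')
    have step1 : ∑ k ∈ Finset.range n, (-Real.log (D k))
        ≤ ∑ k ∈ Finset.range n, ((if k < N then -Real.log (D k) else 0) + 2 * (1 - D k)) := by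
      apply Finset.sum_le_sum
      intro k _
      by_cases hk : k < N
      · simp only [hk, if_true]
        linarith [ht0 k]
      · simp only [hk, if_false]
        push_neg at hk
        have hDk : 1/2 ≤ D k := by
          have := hN k hk
          linarith
        linarith [neg_log_le_two_mul hDk (h1 k)]
    have step2 : ∑ k ∈ Finset.range n, (if k < N then -Real.log (D k) else 0)
        ≤ ∑ k ∈ Finset.range N, (-Real.log (D k)) := by
      rw [← Finset.sum_filter]
      apply Finset.sum_le_sum_of_subset_of_nonneg
      · intro k hk
        simp only [Finset.mem_filter, Finset.mem_range] at hk ⊢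
        exact hk.2
      · intro k _ _
        exact hlognn k
    have step3 : ∑ k ∈ Finset.range n, (1 - D k) ≤ ∑' m, (1 - D m) :=
      Summable.sum_le_tsum _ (fun k _ => ht0 k) hs
    rw [hlog]
    rw [Finset.sum_add_distrib] at step1
    have : ∑ k ∈ Finset.range n, (-Real.log (D k)) = -∑ k ∈ Finset.range n, Real.log (D k) :=
      Finset.sum_neg_distrib _
    rw [this] at step1
    rw [← Finset.mul_sum] at step1
    linarith [step1, step2, step3]
  have hPpos : ∀ n, 0 < ∏ k ∈ Finset.range n, D k :=
    fun n => Finset.prod_pos (fun k _ => h0 k)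
  have hexp : ∀ n, Real.exp (-M) ≤ ∏ k ∈ Finset.range n, D k := by
    intro n
    have h4 : -M ≤ Real.log (∏ k ∈ Finset.range n, D k) := by linarith [hbound n]
    calc Real.exp (-M) ≤ Real.exp (Real.log (∏ k ∈ Finset.range n, D k)) :=
          Real.exp_le_exp.2 h4
      _ = ∏ k ∈ Finset.range n, D k := Real.exp_log (hPpos n)
  have : Real.exp (-M) ≤ L := ge_of_tendsto hL (Eventually.of_forall hexp)
  linarith [Real.exp_pos (-M)]

lemma exists_pos_lb {u : ℕ → ℝ} (hpos : ∀ n, 0 < u n) {L : ℝ}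
    (hlim : Tendsto u atTop (𝓝 L)) (hL : 0 < L) : ∃ ε > 0, ∀ n, ε ≤ u n := by
  obtain ⟨N, hN⟩ := eventually_atTop.1 (hlim.eventually (lt_mem_nhds (half_lt_self hL)))
  have hne : (Finset.range (N + 1)).Nonempty := Finset.nonempty_range_add_one
  set ε := min (L / 2) ((Finset.range (N + 1)).inf' hne u) with hε
  obtain ⟨k, hk, hkeq⟩ := Finset.exists_mem_eq_inf' hne u
  refine ⟨ε, ?_, ?_⟩
  · apply lt_min (half_pos hL)
    rw [hkeq]
    exact hpos k
  · intro n
    rcases le_or_gt n N with h | h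
    · calc ε ≤ (Finset.range (N + 1)).inf' hne u := min_le_right _ _
        _ ≤ u n := Finset.inf'_le u (Finset.mem_range.2 (Nat.lt_succ_of_le h))
    · calc ε ≤ L / 2 := min_le_left _ _
        _ ≤ u n := (hN n h.le).le

-- zero sets and constancy
lemma nonconst_on_open {g : ℂ → ℂ} (hd : DifferentiableOn ℂ g unitDisk)
    (hnc : ∃ z ∈ unitDisk, ∃ w ∈ unitDisk, g z ≠ g w) {U : Set ℂ} (hUo : IsOpen U)
    (hUne : U.Nonempty) (hUsub : U ⊆ unitDisk) :
    ∃ z ∈ U, ∃ w ∈ U, g z ≠ g w := by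
  by_contra hcon
  push_neg at hcon
  obtain ⟨u₀, hu₀⟩ := hUne
  have hev : g =ᶠ[𝓝 u₀] (fun _ => g u₀) := by
    filter_upwards [hUo.mem_nhds hu₀] with x hx
    exact hcon x hx u₀ hu₀
  have heq := (hd.analyticOnNhd isOpen_unitDisk).eqOn_of_preconnected_of_eventuallyEq
    analyticOnNhd_const (convex_ball (0:ℂ) 1).isPreconnected (hUsub hu₀) hev
  obtain ⟨z, hz, w, hw, hne⟩ := hnc
  exact hne ((heq hz).trans (heq hw).symm)

lemma const_of_deriv_zero {g : ℂ → ℂ} (hd : DifferentiableOn ℂ g unitDisk)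
    (h0 : ∀ z ∈ unitDisk, deriv g z = 0) {x y : ℂ} (hx : x ∈ unitDisk) (hy : y ∈ unitDisk) :
    g x = g y := by
  apply Convex.is_const_of_fderivWithin_eq_zero (s := unitDisk) (convex_ball (0:ℂ) 1) hd _ hx hy
  intro z hz
  rw [fderivWithin_of_isOpen isOpen_unitDisk hz]
  ext
  rw [show fderiv ℂ g z 1 = deriv g z from rfl, h0 z hz]
  simp

lemma countable_zeros {g : ℂ → ℂ} (hd : DifferentiableOn ℂ g unitDisk)
    (hnz : ∃ z ∈ unitDisk, g z ≠ 0) : {z | z ∈ unitDisk ∧ g z = 0}.Countable := by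
  have hana : AnalyticOnNhd ℂ g unitDisk := hd.analyticOnNhd isOpen_unitDisk
  have hfin : ∀ m : ℕ, {z : ℂ | z ∈ closedBall (0:ℂ) (1 - 1/(m+2)) ∧ g z = 0}.Finite := by
    intro m
    by_contra hinf
    have hrad : (1 : ℝ) - 1/(m+2) < 1 := by
      have : (0:ℝ) < 1/(m+2) := by positivity
      linarith
    have hsub : closedBall (0:ℂ) (1 - 1/(m+2)) ⊆ unitDisk := closedBall_subset_ball hrad
    obtain ⟨x, hxK, hacc⟩ := Set.Infinite.exists_accPt_of_subset_isCompact hinf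
      (isCompact_closedBall (0:ℂ) _) (fun z hz => hz.1)
    have hxD : x ∈ unitDisk := hsub hxK
    have hfreq : ∃ᶠ y in 𝓝[≠] x, g y = 0 := by
      rw [accPt_iff_frequently] at hacc
      rw [frequently_nhdsWithin_iff]
      exact hacc.mono (fun y hy => ⟨hy.2.2, hy.1⟩)
    have hev : ∀ᶠ y in 𝓝 x, g y = 0 := ((hana x hxD).frequently_zero_iff_eventually_zero).1 hfreq
    have heq := hana.eqOn_zero_of_preconnected_of_eventuallyEq_zero
      (convex_ball (0:ℂ) 1).isPreconnected hxD hev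
    obtain ⟨z, hz, hgz⟩ := hnz
    exact hgz (heq hz)
  apply Set.Countable.mono _ (Set.countable_iUnion
    (fun m => (hfin m).countable))
  intro z hz
  obtain ⟨hzD, hz0⟩ := hz
  have h1 : 0 < 1 - Complex.abs z := by linarith [mem_unitDisk.1 hzD]
  obtain ⟨nn, hn⟩ := exists_nat_one_div_lt h1
  refine mem_iUnion.2 ⟨nn, ⟨?_, hz0⟩⟩
  rw [mem_closedBall, dist_zero_right, Complex.norm_eq_abs]
  have h2 : (1:ℝ)/(nn+2) ≤ 1/(nn+1) := by
    apply one_div_le_one_div_of_le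
    · positivity
    · push_cast; linarith
  linarith [hn, h2]

-- uniform transfer of summability along sequences of base points
lemma abs_sub_le_two {x y : ℂ} (hx : x ∈ unitDisk) (hy : y ∈ unitDisk) :
    Complex.abs (x - y) ≤ 2 := by
  have h1 := mem_unitDisk.1 hx
  have h2 := mem_unitDisk.1 hy
  calc Complex.abs (x - y) ≤ Complex.abs x + Complex.abs y := by
        simpa [Complex.norm_eq_abs] using norm_sub_le x y
    _ ≤ 2 := by linarith

lemma abs_one_sub_conj_le_two {x y : ℂ} (hx : x ∈ unitDisk) (hy : y ∈ unitDisk) :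
    Complex.abs (1 - (starRingEnd ℂ) y * x) ≤ 2 := by
  have h1 := mem_unitDisk.1 hx
  have h2 := mem_unitDisk.1 hy
  have h3 : Complex.abs ((starRingEnd ℂ) y * x) ≤ 1 := by
    rw [map_mul, Complex.abs_conj]
    nlinarith [Complex.abs.nonneg x, Complex.abs.nonneg y]
  calc Complex.abs (1 - (starRingEnd ℂ) y * x)
      ≤ Complex.abs 1 + Complex.abs ((starRingEnd ℂ) y * x) := by
        simpa [Complex.norm_eq_abs, Complex.abs_conj] using norm_sub_le (1:ℂ) ((starRingEnd ℂ) y * x)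
    _ ≤ 2 := by rw [map_one]; linarith

lemma summable_transfer {fseq : ℕ → ℂ → ℂ} (hd : ∀ n, DifferentiableOn ℂ (fseq n) unitDisk)
    (hm : ∀ n, MapsTo (fseq n) unitDisk unitDisk) {z w : ℕ → ℂ}
    (hz : ∀ n, z n ∈ unitDisk) (hw : ∀ n, w n ∈ unitDisk) {ε : ℝ} (hε : 0 < ε)
    (hlb : ∀ n, ε ≤ Complex.abs (1 - (starRingEnd ℂ) (w n) * z n) - Complex.abs (z n - w n))
    (hsum : Summable (fun n => 1 - hypDist (fseq n) (z n))) :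
    Summable (fun n => 1 - hypDist (fseq n) (w n)) := by
  set C := 16 / ε ^ 2 with hC
  apply Summable.of_nonneg_of_le _ _ (hsum.mul_left C)
  · intro n
    linarith [hypDist_le_one (hd n) (hm n) (hw n)]
  · intro n
    have h1 := CMP' (hd n) (hm n) (hz n) (hw n)
    have hA2 : Complex.abs (z n - w n) ≤ 2 := abs_sub_le_two (hz n) (hw n)
    have hB2 : Complex.abs (1 - (starRingEnd ℂ) (w n) * z n) ≤ 2 :=
      abs_one_sub_conj_le_two (hz n) (hw n)
    have hA0 : 0 ≤ Complex.abs (z n - w n) := Complex.abs.nonneg _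
    have hB0 : 0 ≤ Complex.abs (1 - (starRingEnd ℂ) (w n) * z n) := Complex.abs.nonneg _
    have hnum : (Complex.abs (z n - w n) + Complex.abs (1 - (starRingEnd ℂ) (w n) * z n)) ^ 2
        ≤ 16 := by nlinarith [mul_le_mul hA2 hB2 hB0 (by norm_num : (0:ℝ) ≤ 2)]
    have hden : ε ^ 2
        ≤ (Complex.abs (1 - (starRingEnd ℂ) (w n) * z n) - Complex.abs (z n - w n)) ^ 2 := by
      nlinarith [hlb n]
    have hCle : (Complex.abs (z n - w n) + Complex.abs (1 - (starRingEnd ℂ) (w n) * z n)) ^ 2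
        / (Complex.abs (1 - (starRingEnd ℂ) (w n) * z n) - Complex.abs (z n - w n)) ^ 2
        ≤ C := by
      rw [hC]
      apply div_le_div₀ (by norm_num) hnum (by positivity) hden
    have hterm : 0 ≤ 1 - hypDist (fseq n) (z n) := by
      linarith [hypDist_le_one (hd n) (hm n) (hz n)]
    calc 1 - hypDist (fseq n) (w n)
        ≤ (Complex.abs (z n - w n) + Complex.abs (1 - (starRingEnd ℂ) (w n) * z n)) ^ 2
          / (Complex.abs (1 - (starRingEnd ℂ) (w n) * z n) - Complex.abs (z n - w n)) ^ 2
          * (1 - hypDist (fseq n) (z n)) := h1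
      _ ≤ C * (1 - hypDist (fseq n) (z n)) := mul_le_mul_of_nonneg_right hCle hterm

/-- If `(f n)` (indexed from 1) are nonconstant holomorphic self-maps of
the unit disk whose forward iterates `F n = f n ∘ ⋯ ∘ f 1` converge locally uniformly on the
disk to a holomorphic self-map `Flim`, then `Flim` is nonconstant iff the series
`∑ (1 - D_h (f n) a)` converges for every `a` in the disk, iff it converges for some `a`
in the disk. -/
theorem stmt_0
    (f F : ℕ → ℂ → ℂ) (Flim : ℂ → ℂ)
    (hf : ∀ n : ℕ, IsHolSelfMap (f (n + 1)))
    (hfnc : ∀ n : ℕ, ∃ z ∈ unitDisk, ∃ w ∈ unitDisk, f (n + 1) z ≠ f (n + 1) w)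
    (hF0 : ∀ z, F 0 z = z)
    (hFrec : ∀ n z, F (n + 1) z = f (n + 1) (F n z))
    (hFlim : IsHolSelfMap Flim)
    (hconv : TendstoLocallyUniformlyOn F Flim atTop unitDisk) :
    ((∃ z ∈ unitDisk, ∃ w ∈ unitDisk, Flim z ≠ Flim w) ↔
        ∀ a ∈ unitDisk, Summable (fun n : ℕ => 1 - hypDist (f (n + 1)) a)) ∧
    ((∃ z ∈ unitDisk, ∃ w ∈ unitDisk, Flim z ≠ Flim w) ↔
        ∃ a ∈ unitDisk, Summable (fun n : ℕ => 1 - hypDist (f (n + 1)) a)) := by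
  have hfd : ∀ n, DifferentiableOn ℂ (f (n + 1)) unitDisk := fun n => (hf n).1
  have hfm : ∀ n, MapsTo (f (n + 1)) unitDisk unitDisk := fun n => (hf n).2
  have h0D : (0 : ℂ) ∈ unitDisk := by rw [mem_unitDisk]; simp
  -- iterates map the disk to itself and are differentiable
  have hFmaps : ∀ n, MapsTo (F n) unitDisk unitDisk := by
    intro n
    induction n with
    | zero => intro z hz; rw [hF0 z]; exact hz
    | succ n ih => intro z hz; rw [hFrec n z]; exact hfm n (ih hz)
  have hFdiff : ∀ n, DifferentiableOn ℂ (F n) unitDisk := by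
    intro n
    induction n with
    | zero =>
      have h : F 0 = fun z => z := funext hF0
      rw [h]; exact differentiableOn_id
    | succ n ih =>
      have h : F (n + 1) = (f (n + 1)) ∘ (F n) := funext (hFrec n)
      rw [h]; exact DifferentiableOn.comp (hfd n) ih (hFmaps n)
  have hFdAt : ∀ n {z : ℂ}, z ∈ unitDisk → DifferentiableAt ℂ (F n) z :=
    fun n _ hz => (hFdiff n).differentiableAt (isOpen_unitDisk.mem_nhds hz)
  have hfdAt : ∀ n {z : ℂ}, z ∈ unitDisk → DifferentiableAt ℂ (f (n + 1)) z :=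
    fun n _ hz => (hfd n).differentiableAt (isOpen_unitDisk.mem_nhds hz)
  -- chain rule for derivatives
  have hderivF : ∀ n, ∀ a ∈ unitDisk,
      deriv (F (n + 1)) a = deriv (f (n + 1)) (F n a) * deriv (F n) a := by
    intro n a ha
    have h : F (n + 1) = (f (n + 1)) ∘ (F n) := funext (hFrec n)
    rw [h]
    exact deriv_comp a (hfdAt n (hFmaps n ha)) (hFdAt n ha)
  -- chain rule for the hyperbolic distortion
  have hchain : ∀ a ∈ unitDisk, ∀ n,
      hypDist (F n) a = ∏ k ∈ Finset.range n, hypDist (f (k + 1)) (F k a) := by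
    intro a ha n
    induction n with
    | zero =>
      rw [Finset.range_zero, Finset.prod_empty]
      have h : F 0 = fun z => z := funext hF0
      rw [h, hypDist_abs]
      simp only [deriv_id'']
      rw [map_one, mul_one, div_self (one_sub_sq_pos ha).ne']
    | succ n ih =>
      rw [Finset.prod_range_succ, ← ih]
      have hd1 := hderivF n a ha
      have hv : F (n + 1) a = f (n + 1) (F n a) := hFrec n a
      have p1 := one_sub_sq_pos (hFmaps n ha)
      have p2 := one_sub_sq_pos (hfm n (hFmaps n ha))
      rw [hypDist_abs, hypDist_abs, hypDist_abs, hd1, hv, map_mul]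
      field_simp
  -- pointwise convergence of values and derivatives
  have hpt : ∀ a ∈ unitDisk, Tendsto (fun n => F n a) atTop (𝓝 (Flim a)) :=
    fun a ha => hconv.tendsto_at ha
  have hd0 : TendstoLocallyUniformlyOn (deriv ∘ F) (deriv Flim) atTop unitDisk :=
    hconv.deriv (Eventually.of_forall hFdiff) isOpen_unitDisk
  have hdl : ∀ a ∈ unitDisk, Tendsto (fun n => deriv (F n) a) atTop (𝓝 (deriv Flim a)) :=
    fun a ha => hd0.tendsto_at ha
  -- convergence of hyperbolic distortions
  have hhcv : ∀ a ∈ unitDisk,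
      Tendsto (fun n => hypDist (F n) a) atTop (𝓝 (hypDist Flim a)) := by
    intro a ha
    simp only [hypDist_abs]
    apply Tendsto.div
    · exact tendsto_const_nhds.mul ((Complex.continuous_abs.tendsto _).comp (hdl a ha))
    · exact Tendsto.const_sub _ (((Complex.continuous_abs.tendsto _).comp (hpt a ha)).pow 2)
    · exact (one_sub_sq_pos (hFlim.2 ha)).ne'
  have horb : ∀ a ∈ unitDisk,
      Tendsto (fun n => ∏ k ∈ Finset.range n, hypDist (f (k + 1)) (F k a)) atTop
        (𝓝 (hypDist Flim a)) :=
    fun a ha => (hhcv a ha).congr (fun n => hchain a ha n)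
  -- transfer between fixed base points
  have htrans : ∀ a ∈ unitDisk, ∀ b ∈ unitDisk,
      Summable (fun n : ℕ => 1 - hypDist (f (n + 1)) a) →
      Summable (fun n : ℕ => 1 - hypDist (f (n + 1)) b) := by
    intro a ha b hb hsum
    have hεpos : 0 < Complex.abs (1 - (starRingEnd ℂ) b * a) - Complex.abs (a - b) := by
      have h0 := abs_sub_lt_abs_one_sub (mem_unitDisk.1 hb) (mem_unitDisk.1 ha)
      rw [Complex.abs.map_sub b a] at h0
      linarith
    exact summable_transfer hfd hfm (fun _ => ha) (fun _ => hb) hεpos (fun n => le_refl _) hsum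
  -- positive lower bound for the orbit pseudo-distance quantities (both orientations)
  have horblb : ∀ b ∈ unitDisk, ∃ ε > 0, (∀ n,
      ε ≤ Complex.abs (1 - (starRingEnd ℂ) (F n b) * b) - Complex.abs (b - F n b)) ∧ (∀ n,
      ε ≤ Complex.abs (1 - (starRingEnd ℂ) b * F n b) - Complex.abs (F n b - b)) := by
    intro b hb
    have hcont1 : Continuous (fun x : ℂ =>
        Complex.abs (1 - (starRingEnd ℂ) x * b) - Complex.abs (b - x)) := by
      apply Continuous.sub
      · exact Complex.continuous_abs.comp
          (continuous_const.sub ((Complex.continuous_conj.comp continuous_id).mul continuous_const))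
      · exact Complex.continuous_abs.comp (continuous_const.sub continuous_id)
    have hcont2 : Continuous (fun x : ℂ =>
        Complex.abs (1 - (starRingEnd ℂ) b * x) - Complex.abs (x - b)) := by
      apply Continuous.sub
      · exact Complex.continuous_abs.comp (continuous_const.sub (continuous_const.mul continuous_id))
      · exact Complex.continuous_abs.comp (continuous_id.sub continuous_const)
    have hl1 : Tendsto (fun n => Complex.abs (1 - (starRingEnd ℂ) (F n b) * b)
        - Complex.abs (b - F n b)) atTop
        (𝓝 (Complex.abs (1 - (starRingEnd ℂ) (Flim b) * b) - Complex.abs (b - Flim b))) :=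
      (hcont1.tendsto (Flim b)).comp (hpt b hb)
    have hl2 : Tendsto (fun n => Complex.abs (1 - (starRingEnd ℂ) b * F n b)
        - Complex.abs (F n b - b)) atTop
        (𝓝 (Complex.abs (1 - (starRingEnd ℂ) b * Flim b) - Complex.abs (Flim b - b))) :=
      (hcont2.tendsto (Flim b)).comp (hpt b hb)
    have hp1 : ∀ n, 0 < Complex.abs (1 - (starRingEnd ℂ) (F n b) * b)
        - Complex.abs (b - F n b) := by
      intro n
      have h0 := abs_sub_lt_abs_one_sub (mem_unitDisk.1 (hFmaps n hb)) (mem_unitDisk.1 hb)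
      rw [Complex.abs.map_sub (F n b) b] at h0
      linarith
    have hp2 : ∀ n, 0 < Complex.abs (1 - (starRingEnd ℂ) b * F n b)
        - Complex.abs (F n b - b) := by
      intro n
      have h0 := abs_sub_lt_abs_one_sub (mem_unitDisk.1 hb) (mem_unitDisk.1 (hFmaps n hb))
      rw [Complex.abs.map_sub b (F n b)] at h0
      linarith
    have hLp1 : 0 < Complex.abs (1 - (starRingEnd ℂ) (Flim b) * b) - Complex.abs (b - Flim b) := by
      have h0 := abs_sub_lt_abs_one_sub (mem_unitDisk.1 (hFlim.2 hb)) (mem_unitDisk.1 hb)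
      rw [Complex.abs.map_sub (Flim b) b] at h0
      linarith
    have hLp2 : 0 < Complex.abs (1 - (starRingEnd ℂ) b * Flim b) - Complex.abs (Flim b - b) := by
      have h0 := abs_sub_lt_abs_one_sub (mem_unitDisk.1 hb) (mem_unitDisk.1 (hFlim.2 hb))
      rw [Complex.abs.map_sub b (Flim b)] at h0
      linarith
    obtain ⟨ε₁, hε₁, hε₁le⟩ := exists_pos_lb hp1 hl1 hLp1
    obtain ⟨ε₂, hε₂, hε₂le⟩ := exists_pos_lb hp2 hl2 hLp2
    refine ⟨min ε₁ ε₂, lt_min hε₁ hε₂, fun n => le_trans (min_le_left _ _) (hε₁le n),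
      fun n => le_trans (min_le_right _ _) (hε₂le n)⟩
  -- Direction A : nonconstant limit implies summability at every point
  have dirA : (∃ z ∈ unitDisk, ∃ w ∈ unitDisk, Flim z ≠ Flim w) →
      ∀ a ∈ unitDisk, Summable (fun n : ℕ => 1 - hypDist (f (n + 1)) a) := by
    intro hnc a ha
    have hb' : ∃ b ∈ unitDisk, deriv Flim b ≠ 0 := by
      by_contra hcon
      push_neg at hcon
      obtain ⟨z, hz, w, hw, hne⟩ := hnc
      exact hne (const_of_deriv_zero hFlim.1 hcon hz hw)
    obtain ⟨b, hb, hdb⟩ := hb'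
    have hpos : 0 < hypDist Flim b := by
      rw [hypDist_abs]
      exact div_pos (mul_pos (one_sub_sq_pos hb) (Complex.abs.pos hdb))
        (one_sub_sq_pos (hFlim.2 hb))
    have hsumOrb : Summable (fun n => 1 - hypDist (f (n + 1)) (F n b)) :=
      summable_of_prodlim_pos (fun k => hypDist_nonneg (hfm k) (hFmaps k hb))
        (fun k => hypDist_le_one (hfd k) (hfm k) (hFmaps k hb)) (horb b hb) hpos
    obtain ⟨ε, hε, _, hlb2⟩ := horblb b hb
    have hsumb : Summable (fun n => 1 - hypDist (f (n + 1)) b) :=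
      summable_transfer hfd hfm (fun n => hFmaps n hb) (fun _ => hb) hε hlb2 hsumOrb
    exact htrans b hb a ha hsumb
  -- Direction B : summability somewhere implies nonconstant limit
  have dirB : (∃ a ∈ unitDisk, Summable (fun n : ℕ => 1 - hypDist (f (n + 1)) a)) →
      (∃ z ∈ unitDisk, ∃ w ∈ unitDisk, Flim z ≠ Flim w) := by
    rintro ⟨a, ha, hsa⟩
    have hSall : ∀ b ∈ unitDisk, Summable (fun n : ℕ => 1 - hypDist (f (n + 1)) b) :=
      fun b hb => htrans a ha b hb hsa
    -- each iterate is nonconstant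
    have hFnc : ∀ n, ∃ z ∈ unitDisk, ∃ w ∈ unitDisk, F n z ≠ F n w := by
      intro n
      induction n with
      | zero =>
        refine ⟨0, h0D, 1/2, ?_, ?_⟩
        · rw [mem_unitDisk]
          rw [show Complex.abs (1/2) = 1/2 by rw [map_div₀, map_one, Complex.abs_two]]
          norm_num
        · rw [hF0, hF0]; norm_num
      | succ n ih =>
        have hana := (hFdiff n).analyticOnNhd isOpen_unitDisk
        rcases hana.is_constant_or_isOpen (convex_ball (0:ℂ) 1).isPreconnected with hconst | hopen
        · obtain ⟨wv, hwv⟩ := hconst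
          obtain ⟨z, hz, w, hw, hne⟩ := ih
          exact absurd ((hwv z hz).trans (hwv w hw).symm) hne
        · have hVopen : IsOpen (F n '' unitDisk) := hopen unitDisk subset_rfl isOpen_unitDisk
          have hVsub : F n '' unitDisk ⊆ unitDisk := (hFmaps n).image_subset
          have hVne : (F n '' unitDisk).Nonempty := ⟨F n 0, mem_image_of_mem _ h0D⟩
          obtain ⟨v₁, hv₁, v₂, hv₂, hvne⟩ := nonconst_on_open (hfd n) (hfnc n) hVopen hVne hVsub
          obtain ⟨z₁, hz₁, rfl⟩ := hv₁
          obtain ⟨z₂, hz₂, rfl⟩ := hv₂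
          exact ⟨z₁, hz₁, z₂, hz₂, by rw [hFrec n z₁, hFrec n z₂]; exact hvne⟩
    have hdFne : ∀ n, ∃ z ∈ unitDisk, deriv (F n) z ≠ 0 := by
      intro n
      by_contra hcon
      push_neg at hcon
      obtain ⟨z, hz, w, hw, hne⟩ := hFnc n
      exact hne (const_of_deriv_zero (hFdiff n) hcon hz hw)
    have hZc : ∀ n, {z | z ∈ unitDisk ∧ deriv (F n) z = 0}.Countable := by
      intro n
      exact countable_zeros
        (((hFdiff n).analyticOnNhd isOpen_unitDisk).deriv.differentiableOn) (hdFne n)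
    have hexb : ∃ b, b ∈ unitDisk ∧ ∀ n, deriv (F n) b ≠ 0 := by
      by_contra hcon
      push_neg at hcon
      have hsub : unitDisk ⊆ ⋃ n, {z | z ∈ unitDisk ∧ deriv (F n) z = 0} := by
        intro z hz
        obtain ⟨n, hn⟩ := hcon z hz
        exact mem_iUnion.2 ⟨n, ⟨hz, hn⟩⟩
      have h1 : MeasureTheory.volume (⋃ n, {z | z ∈ unitDisk ∧ deriv (F n) z = 0}) = 0 :=
        (Set.countable_iUnion hZc).measure_zero _
      have h2 : MeasureTheory.volume unitDisk = 0 :=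
        le_antisymm (h1 ▸ MeasureTheory.measure_mono hsub) zero_le
      have h3 : 0 < MeasureTheory.volume unitDisk := measure_ball_pos _ _ one_pos
      rw [h2] at h3
      exact lt_irrefl _ h3
    obtain ⟨b, hb, hdFb⟩ := hexb
    have hfderivne : ∀ k, deriv (f (k + 1)) (F k b) ≠ 0 := by
      intro k hk
      apply hdFb (k + 1)
      rw [hderivF k b hb, hk, zero_mul]
    have hDpos : ∀ k, 0 < hypDist (f (k + 1)) (F k b) := by
      intro k
      rw [hypDist_abs]
      exact div_pos (mul_pos (one_sub_sq_pos (hFmaps k hb)) (Complex.abs.pos (hfderivne k)))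
        (one_sub_sq_pos (hfm k (hFmaps k hb)))
    obtain ⟨ε, hε, hlb1, _⟩ := horblb b hb
    have hsumOrb : Summable (fun n => 1 - hypDist (f (n + 1)) (F n b)) :=
      summable_transfer hfd hfm (fun _ => hb) (fun n => hFmaps n hb) hε hlb1 (hSall b hb)
    have hLpos : 0 < hypDist Flim b :=
      prodlim_pos_of_summable hDpos
        (fun k => hypDist_le_one (hfd k) (hfm k) (hFmaps k hb)) hsumOrb (horb b hb)
    have hdFlim : deriv Flim b ≠ 0 := by
      intro h0
      rw [hypDist_abs, h0] at hLpos
      simp at hLpos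
    by_contra hcon
    push_neg at hcon
    apply hdFlim
    have hev : Flim =ᶠ[𝓝 b] (fun _ => Flim b) := by
      filter_upwards [isOpen_unitDisk.mem_nhds hb] with x hx
      exact hcon x hx b hb
    rw [Filter.EventuallyEq.deriv_eq hev]
    exact deriv_const b _
  constructor
  · exact ⟨fun hnc => dirA hnc, fun hall => dirB ⟨0, h0D, hall 0 h0D⟩⟩
  · exact ⟨fun hnc => ⟨0, h0D, dirA hnc 0 h0D⟩, dirB⟩
end
end

section
/- Let (f_n)_{n≥1} be a sequence of holomorphic self-maps of the unit disk 𝔻 whose forward iterates F_n := f_n ∘ ⋯ ∘ f_1 converge locally uniformly on 𝔻 to a nonconstant holomorphic self-map F of 𝔻, and let c, w ∈ 𝔻. Then the sequence n ↦ ord_w(F_n − F_n(c)) is nondecreasing, each of its terms is at most ord_w(F − F(c)), and there exists N such that ord_w(F_n − F_n(c)) = ord_w(F − F(c)) for all n ≥ N. -/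
open Filter Metric Set

noncomputable section

/-- The order of vanishing of `g` at `w`: the least `k` such that the `k`-th derivative of
`g` at `w` is nonzero (`⊤` if all derivatives vanish). -/
def ordAt (g : ℂ → ℂ) (w : ℂ) : ℕ∞ :=
  sInf {n : ℕ∞ | ∃ k : ℕ, (k : ℕ∞) = n ∧ iteratedDeriv k g w ≠ 0}

open Function Topology Nat

section Aux

variable {g u v h : ℂ → ℂ} {w : ℂ} {k : ℕ}

lemma ordAt_le_of_ne (hk : iteratedDeriv k g w ≠ 0) : ordAt g w ≤ k :=
  sInf_le ⟨k, rfl, hk⟩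

lemma iteratedDeriv_eq_zero_of_lt_ordAt (hk : (k : ℕ∞) < ordAt g w) :
    iteratedDeriv k g w = 0 := by
  by_contra hne
  exact absurd (ordAt_le_of_ne hne) (not_le.mpr hk)

lemma ordAt_eq_top (hall : ∀ k, iteratedDeriv k g w = 0) : ordAt g w = ⊤ := by
  have he : {n : ℕ∞ | ∃ k : ℕ, (k : ℕ∞) = n ∧ iteratedDeriv k g w ≠ 0} = ∅ := by
    ext n
    simp only [mem_setOf_eq, mem_empty_iff_false, iff_false, not_exists]
    rintro j ⟨rfl, hj⟩
    exact hj (hall j)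
  rw [ordAt, he]
  exact sInf_empty

lemma ordAt_eq_coe_iff :
    ordAt g w = (k : ℕ∞) ↔ iteratedDeriv k g w ≠ 0 ∧ ∀ j < k, iteratedDeriv j g w = 0 := by
  constructor
  · intro hord
    refine ⟨?_, fun j hj => iteratedDeriv_eq_zero_of_lt_ordAt (by rw [hord]; exact_mod_cast hj)⟩
    by_contra hk
    have hge : ((k + 1 : ℕ) : ℕ∞) ≤ ordAt g w := by
      apply le_sInf
      rintro b ⟨j, rfl, hj⟩
      have h1 : ordAt g w ≤ j := ordAt_le_of_ne hj
      rw [hord] at h1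
      have hkj : k ≤ j := by exact_mod_cast h1
      have hne : k ≠ j := fun e => hj (e ▸ hk)
      exact_mod_cast Nat.succ_le_of_lt (lt_of_le_of_ne hkj hne)
    rw [hord] at hge
    exact absurd hge (by exact_mod_cast Nat.not_succ_le_self k)
  · rintro ⟨h1, h2⟩
    refine le_antisymm (ordAt_le_of_ne h1) (le_sInf ?_)
    rintro b ⟨j, rfl, hj⟩
    by_contra hb
    push_neg at hb
    have : j < k := by exact_mod_cast hb
    exact hj (h2 j this)

lemma iteratedDeriv_eq_smul_coeff {p : FormalMultilinearSeries ℂ ℂ ℂ}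
    (hp : HasFPowerSeriesAt g p w) (k : ℕ) :
    iteratedDeriv k g w = (k : ℕ) ! • p.coeff k := by
  obtain ⟨r, hr⟩ := hp
  rw [iteratedDeriv_eq_iteratedFDeriv, ← hr.factorial_smul 1 k]
  rfl

lemma factorial_smul_ne_zero_iff {x : ℂ} : (k : ℕ) ! • x ≠ 0 ↔ x ≠ 0 := by
  rw [nsmul_eq_mul, mul_ne_zero_iff]
  simp [Nat.factorial_ne_zero]

lemma ordAt_eq_order (hg : AnalyticAt ℂ g w) : ordAt g w = analyticOrderAt g w := by
  obtain ⟨p, hp⟩ := id hg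
  by_cases hp0 : p = 0
  · have hz : ∀ᶠ z in 𝓝 w, g z = 0 := hp.locally_zero_iff.mpr hp0
    rw [analyticOrderAt_eq_top.mpr hz]
    apply ordAt_eq_top
    intro j
    rw [iteratedDeriv_eq_smul_coeff hp j, hp0]
    simp [FormalMultilinearSeries.coeff]
  · have horder : analyticOrderAt g w = ↑p.order :=
      (hg.analyticOrderAt_eq_natCast (n := p.order)).mpr
        ⟨_, ⟨_, hp.has_fpower_series_iterate_dslope_fslope p.order⟩,
          hp.iterate_dslope_fslope_ne_zero hp0, Eventually.of_forall hp.eq_pow_order_mul_iterate_dslope⟩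
    rw [horder, ordAt_eq_coe_iff]
    constructor
    · rw [iteratedDeriv_eq_smul_coeff hp, factorial_smul_ne_zero_iff]
      rw [ne_eq, FormalMultilinearSeries.coeff_eq_zero]
      exact p.apply_order_ne_zero hp0
    · intro j hj
      rw [iteratedDeriv_eq_smul_coeff hp,
        FormalMultilinearSeries.coeff_eq_zero.mpr (p.apply_eq_zero_of_lt_order hj), smul_zero]

lemma le_order_of_pow_mul {n : ℕ} (hg : AnalyticAt ℂ g w) (hh : AnalyticAt ℂ h w)
    (heq : ∀ᶠ z in 𝓝 w, g z = (z - w) ^ n * h z) : (n : ℕ∞) ≤ analyticOrderAt g w := by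
  rcases eq_or_ne (analyticOrderAt h w) ⊤ with h0 | h0
  · have hz : ∀ᶠ z in 𝓝 w, g z = 0 := by
      filter_upwards [heq, analyticOrderAt_eq_top.mp h0] with z h1 h2
      rw [h1, h2, mul_zero]
    rw [analyticOrderAt_eq_top.mpr hz]
    exact le_top
  · obtain ⟨m, hm⟩ := WithTop.ne_top_iff_exists.mp h0
    obtain ⟨q, hq, hq0, hqe⟩ := (hh.analyticOrderAt_eq_natCast (n := m)).mp hm.symm
    have hgo : analyticOrderAt g w = ↑(n + m) := by
      rw [hg.analyticOrderAt_eq_natCast]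
      refine ⟨q, hq, hq0, ?_⟩
      filter_upwards [heq, hqe] with z h1 h2
      rw [h1, h2, smul_eq_mul, smul_eq_mul, pow_add]
      ring
    rw [hgo]
    exact_mod_cast Nat.le_add_right n m

lemma ordAt_le_mul (hu : AnalyticAt ℂ u w) (hv : AnalyticAt ℂ v w) :
    ordAt u w ≤ ordAt (fun z => u z * v z) w := by
  have huv : AnalyticAt ℂ (fun z => u z * v z) w := hu.mul hv
  rw [ordAt_eq_order hu, ordAt_eq_order huv]
  rcases eq_or_ne (analyticOrderAt u w) ⊤ with h0 | h0
  · have hz : ∀ᶠ z in 𝓝 w, u z * v z = 0 := by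
      filter_upwards [analyticOrderAt_eq_top.mp h0] with z h1
      rw [h1, zero_mul]
    rw [h0, analyticOrderAt_eq_top.mpr hz]
  · obtain ⟨n, hn⟩ := WithTop.ne_top_iff_exists.mp h0
    obtain ⟨q, hqa, hq0, hqe⟩ := (hu.analyticOrderAt_eq_natCast (n := n)).mp hn.symm
    rw [← hn]
    apply le_order_of_pow_mul huv (hqa.mul hv)
    filter_upwards [hqe] with z h1
    show u z * v z = (z - w) ^ n * (q z * v z)
    rw [h1, smul_eq_mul]
    ring

lemma iterDslope_apply_self (hg : AnalyticAt ℂ g w) (j : ℕ) :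
    (swap dslope w)^[j] g w = ((j : ℕ)! : ℂ)⁻¹ * iteratedDeriv j g w := by
  obtain ⟨p, hp⟩ := hg
  have h1 := (hp.has_fpower_series_iterate_dslope_fslope j).coeff_zero (fun _ => 1)
  have h2 : (FormalMultilinearSeries.fslope^[j] p) 0 (fun _ => 1)
      = (FormalMultilinearSeries.fslope^[j] p).coeff 0 := rfl
  rw [← h1, h2, FormalMultilinearSeries.coeff_iterate_fslope, zero_add,
    iteratedDeriv_eq_smul_coeff hp j, nsmul_eq_mul, ← mul_assoc,
    inv_mul_cancel₀ (by exact_mod_cast j.factorial_ne_zero), one_mul]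

lemma iterDslope_diffOn {s : Set ℂ} (hs : IsOpen s) (hw : w ∈ s)
    (hg : DifferentiableOn ℂ g s) (L : ℕ) :
    DifferentiableOn ℂ ((swap dslope w)^[L] g) s := by
  induction L with
  | zero => simpa using hg
  | succ L ih =>
    intro z hz
    rw [Function.iterate_succ_apply']
    rcases eq_or_ne z w with rfl | hzw
    · obtain ⟨p, hp⟩ := (hg.analyticOnNhd hs) z hz
      have hA := (hp.has_fpower_series_iterate_dslope_fslope (L + 1)).analyticAt
      rw [Function.iterate_succ_apply'] at hA
      exact hA.differentiableAt.differentiableWithinAt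
    · exact (differentiableWithinAt_dslope_of_ne hzw).mpr (ih z hz)

lemma iterDslope_apply_ne (hg : AnalyticAt ℂ g w) (L : ℕ)
    (hv : ∀ j < L, iteratedDeriv j g w = 0) :
    ∀ z, z ≠ w → (swap dslope w)^[L] g z = g z / (z - w) ^ L := by
  induction L with
  | zero => intro z _; simp
  | succ L ih =>
    intro z hz
    rw [Function.iterate_succ_apply']
    have hprev : (swap dslope w)^[L] g w = 0 := by
      rw [iterDslope_apply_self hg L, hv L (Nat.lt_succ_self L), mul_zero]
    show dslope ((swap dslope w)^[L] g) w z = _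
    rw [dslope_of_ne _ hz, slope_def_field,
      ih (fun j hj => hv j (hj.trans (Nat.lt_succ_self L))) z hz, hprev, sub_zero,
      div_div, ← pow_succ]

end Aux

/-- If the forward iterates `F n` of holomorphic self-maps `(f n)` of the
unit disk converge locally uniformly to a nonconstant holomorphic self-map `Flim`, then for
`c, w` in the disk the sequence `n ↦ ord_w (F n - F n c)` is nondecreasing, bounded above by
`ord_w (Flim - Flim c)`, and eventually equal to it. -/
theorem stmt_7
    (f F : ℕ → ℂ → ℂ) (Flim : ℂ → ℂ) (c w : ℂ)
    (hf : ∀ n : ℕ, IsHolSelfMap (f (n + 1)))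
    (hF0 : ∀ z, F 0 z = z)
    (hFrec : ∀ n z, F (n + 1) z = f (n + 1) (F n z))
    (hFlim : IsHolSelfMap Flim)
    (hconv : TendstoLocallyUniformlyOn F Flim atTop unitDisk)
    (hnc : ∃ z ∈ unitDisk, ∃ w' ∈ unitDisk, Flim z ≠ Flim w')
    (hc : c ∈ unitDisk) (hw : w ∈ unitDisk) :
    Monotone (fun n : ℕ => ordAt (fun z => F (n + 1) z - F (n + 1) c) w) ∧
    (∀ n : ℕ, ordAt (fun z => F (n + 1) z - F (n + 1) c) w ≤
        ordAt (fun z => Flim z - Flim c) w) ∧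
    (∃ N : ℕ, ∀ n ≥ N, ordAt (fun z => F (n + 1) z - F (n + 1) c) w =
        ordAt (fun z => Flim z - Flim c) w) := by
  have hD : IsOpen unitDisk := isOpen_ball
  have hpre : IsPreconnected unitDisk := (convex_ball (0:ℂ) 1).isPreconnected
  -- basic properties of the iterates
  have hFn : ∀ n, DifferentiableOn ℂ (F n) unitDisk ∧ MapsTo (F n) unitDisk unitDisk := by
    intro n
    induction n with
    | zero =>
      have h0 : F 0 = fun z => z := funext hF0
      rw [h0]
      exact ⟨differentiableOn_id, fun z hz => hz⟩
    | succ n ih =>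
      have h1 : F (n + 1) = fun z => f (n + 1) (F n z) := funext (hFrec n)
      rw [h1]
      exact ⟨(hf n).1.comp ih.1 ih.2, fun z hz => (hf n).2 (ih.2 hz)⟩
  have hUdiff : ∀ n, DifferentiableOn ℂ (fun z => F n z - F n c) unitDisk :=
    fun n => (hFn n).1.sub (differentiableOn_const _)
  have hUldiff : DifferentiableOn ℂ (fun z => Flim z - Flim c) unitDisk :=
    hFlim.1.sub (differentiableOn_const _)
  have hUanal : ∀ n, AnalyticOnNhd ℂ (fun z => F n z - F n c) unitDisk :=
    fun n => (hUdiff n).analyticOnNhd hD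
  have hUlanal : AnalyticOnNhd ℂ (fun z => Flim z - Flim c) unitDisk :=
    hUldiff.analyticOnNhd hD
  -- pointwise convergence
  have hptF : ∀ z ∈ unitDisk, Tendsto (fun n => F n z) atTop (𝓝 (Flim z)) :=
    fun z hz => hconv.tendsto_at hz
  have hptU : ∀ z ∈ unitDisk,
      Tendsto (fun n => F n z - F n c) atTop (𝓝 (Flim z - Flim c)) :=
    fun z hz => (hptF z hz).sub (hptF c hc)
  -- locally uniform convergence of the differences
  have hconvU : TendstoLocallyUniformlyOn (fun n => fun z => F n z - F n c)
      (fun z => Flim z - Flim c) atTop unitDisk := by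
    rw [tendstoLocallyUniformlyOn_iff_forall_isCompact hD]
    intro K hK hKc
    have h1 : TendstoUniformlyOn F Flim atTop K :=
      (tendstoLocallyUniformlyOn_iff_tendstoUniformlyOn_of_compact hKc).mp (hconv.mono hK)
    have h2 : TendstoUniformlyOn (fun n (_ : ℂ) => F n c) (fun _ => Flim c) atTop K :=
      (hptF c hc).tendstoUniformlyOn_const K
    exact h1.sub h2
  -- convergence of iterated derivatives
  have hconvD : ∀ j : ℕ,
      TendstoLocallyUniformlyOn (fun n => iteratedDeriv j (fun z => F n z - F n c))
        (iteratedDeriv j (fun z => Flim z - Flim c)) atTop unitDisk ∧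
      (∀ n, DifferentiableOn ℂ (iteratedDeriv j (fun z => F n z - F n c)) unitDisk) ∧
      DifferentiableOn ℂ (iteratedDeriv j (fun z => Flim z - Flim c)) unitDisk := by
    intro j
    induction j with
    | zero =>
      simpa only [iteratedDeriv_zero] using ⟨hconvU, hUdiff, hUldiff⟩
    | succ j ih =>
      obtain ⟨h1, h2, h3⟩ := ih
      refine ⟨?_, ?_, ?_⟩
      · have h4 := h1.deriv (Eventually.of_forall h2) hD
        have h5 : (deriv ∘ fun n => iteratedDeriv j (fun z => F n z - F n c))
            = fun n => iteratedDeriv (j + 1) (fun z => F n z - F n c) := by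
          funext n
          rw [Function.comp_apply, ← iteratedDeriv_succ]
        rw [h5, ← iteratedDeriv_succ] at h4
        exact h4
      · intro n
        rw [iteratedDeriv_succ]
        exact ((h2 n).analyticOnNhd hD).deriv.differentiableOn
      · rw [iteratedDeriv_succ]
        exact (h3.analyticOnNhd hD).deriv.differentiableOn
  have hdW : ∀ j : ℕ, Tendsto (fun n => iteratedDeriv j (fun z => F n z - F n c) w)
      atTop (𝓝 (iteratedDeriv j (fun z => Flim z - Flim c) w)) :=
    fun j => (hconvD j).1.tendsto_at hw
  -- multiplicative structure
  have hV : ∀ n : ℕ, ∃ v : ℂ → ℂ, AnalyticAt ℂ v w ∧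
      (fun z => F (n + 1) z - F (n + 1) c) = fun z => (F n z - F n c) * v z := by
    intro n
    refine ⟨fun z => dslope (f (n + 1)) (F n c) (F n z), ?_, ?_⟩
    · have h1 : DifferentiableOn ℂ (dslope (f (n + 1)) (F n c)) unitDisk := by
        intro z hz
        rcases eq_or_ne z (F n c) with heq | hne
        · obtain ⟨p, hp⟩ := ((hf n).1.analyticOnNhd hD) (F n c) (heq ▸ hz)
          have hA := hp.has_fpower_series_dslope_fslope.analyticAt
          rw [heq]
          exact hA.differentiableAt.differentiableWithinAt
        · exact (differentiableWithinAt_dslope_of_ne hne).mpr ((hf n).1 z hz)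
      exact ((h1.analyticOnNhd hD) _ ((hFn n).2 hw)).comp (((hFn n).1.analyticOnNhd hD) w hw)
    · funext z
      rw [hFrec n z, hFrec n c, ← sub_smul_dslope (f (n + 1)) (F n c) (F n z), smul_eq_mul]
  have hmono_step : ∀ n : ℕ, ordAt (fun z => F n z - F n c) w ≤
      ordAt (fun z => F (n + 1) z - F (n + 1) c) w := by
    intro n
    obtain ⟨v, hva, hveq⟩ := hV n
    rw [hveq]
    exact ordAt_le_mul ((hUanal n) w hw) hva
  have hmono : Monotone (fun n : ℕ => ordAt (fun z => F (n + 1) z - F (n + 1) c) w) :=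
    monotone_nat_of_le_succ (fun n => hmono_step (n + 1))
  -- the limit is nonconstant
  have hUlne : ¬ (∀ᶠ z in 𝓝 w, Flim z - Flim c = 0) := by
    intro hzero
    obtain ⟨z0, hz0, w0, hw0, hne⟩ := hnc
    have hzero' : (fun z => Flim z - Flim c) =ᶠ[𝓝 w] (0 : ℂ → ℂ) := by
      filter_upwards [hzero] with z hz using hz
    have hEq : EqOn (fun z => Flim z - Flim c) 0 unitDisk :=
      hUlanal.eqOn_zero_of_preconnected_of_eventuallyEq_zero hpre hw hzero'
    have e1 : Flim z0 - Flim c = 0 := hEq hz0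
    have e2 : Flim w0 - Flim c = 0 := hEq hw0
    apply hne
    have : Flim z0 = Flim c := by linear_combination e1
    rw [this]
    linear_combination -e2
  have hmne : ordAt (fun z => Flim z - Flim c) w ≠ ⊤ := by
    intro htop
    apply hUlne
    obtain ⟨p, hp⟩ := hUlanal w hw
    have hp0 : p = 0 := by
      ext1 k
      have h1 : iteratedDeriv k (fun z => Flim z - Flim c) w = 0 :=
        iteratedDeriv_eq_zero_of_lt_ordAt (by rw [htop]; exact WithTop.coe_lt_top k)
      rw [iteratedDeriv_eq_smul_coeff hp k] at h1
      have h2 : p.coeff k = 0 := by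
        rcases smul_eq_zero.mp h1 with h | h
        · exact absurd h k.factorial_ne_zero
        · exact h
      have h3 : p k = 0 := FormalMultilinearSeries.coeff_eq_zero.mp h2
      simp [h3]
    exact hp.locally_zero_iff.mpr hp0
  obtain ⟨m0, hm0t⟩ := WithTop.ne_top_iff_exists.mp hmne
  have hm0 : (m0 : ℕ∞) = ordAt (fun z => Flim z - Flim c) w := by exact_mod_cast hm0t
  have hm0' := ordAt_eq_coe_iff.mp hm0.symm
  -- the upper bound
  have hbound : ∀ n : ℕ, ordAt (fun z => F (n + 1) z - F (n + 1) c) w ≤ (m0 : ℕ∞) := by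
    intro n
    by_contra hlt
    push_neg at hlt
    have hall : ∀ k, n ≤ k →
        iteratedDeriv m0 (fun z => F (k + 1) z - F (k + 1) c) w = 0 := by
      intro k hk
      exact iteratedDeriv_eq_zero_of_lt_ordAt (lt_of_lt_of_le hlt (hmono hk))
    have htend : Tendsto (fun k => iteratedDeriv m0 (fun z => F (k + 1) z - F (k + 1) c) w)
        atTop (𝓝 (iteratedDeriv m0 (fun z => Flim z - Flim c) w)) :=
      (hdW m0).comp (tendsto_add_atTop_nat 1)
    have hzero : iteratedDeriv m0 (fun z => Flim z - Flim c) w = 0 := by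
      have h0 : Tendsto (fun k => iteratedDeriv m0 (fun z => F (k + 1) z - F (k + 1) c) w)
          atTop (𝓝 0) := by
        apply Tendsto.congr' _ tendsto_const_nhds
        filter_upwards [eventually_ge_atTop n] with k hk
        exact (hall k hk).symm
      exact tendsto_nhds_unique htend h0
    exact hm0'.1 hzero
  -- stabilization of the (monotone, bounded) order sequence
  have hfinN : ∀ n, ordAt (fun z => F (n + 1) z - F (n + 1) c) w ≠ ⊤ :=
    fun n => (lt_of_le_of_lt (hbound n) (WithTop.coe_lt_top m0)).ne
  have htoNat_mono : Monotone
      (fun n => (ordAt (fun z => F (n + 1) z - F (n + 1) c) w).toNat) := by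
    intro i j hij
    exact ENat.toNat_le_toNat (hmono hij) (hfinN j)
  have htoNat_bdd : BddAbove
      (range (fun n => (ordAt (fun z => F (n + 1) z - F (n + 1) c) w).toNat)) := by
    refine ⟨m0, ?_⟩
    rintro x ⟨n, rfl⟩
    have h1 := ENat.toNat_le_toNat (hbound n) (WithTop.coe_lt_top m0).ne
    simpa using h1
  obtain ⟨N, hN⟩ : ∃ N, (ordAt (fun z => F (N + 1) z - F (N + 1) c) w).toNat
      = sSup (range (fun n => (ordAt (fun z => F (n + 1) z - F (n + 1) c) w).toNat)) := by
    obtain ⟨N, hN⟩ := Nat.sSup_mem (Set.range_nonempty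
      (fun n => (ordAt (fun z => F (n + 1) z - F (n + 1) c) w).toNat)) htoNat_bdd
    exact ⟨N, by simpa using hN⟩
  set L := (ordAt (fun z => F (N + 1) z - F (N + 1) c) w).toNat with hLdef
  have hstab : ∀ n, N ≤ n → ordAt (fun z => F (n + 1) z - F (n + 1) c) w = (L : ℕ∞) := by
    intro n hn
    have h1 : (ordAt (fun z => F (n + 1) z - F (n + 1) c) w).toNat ≤ L := by
      rw [hN]
      exact le_csSup htoNat_bdd ⟨n, rfl⟩
    have h2 : L ≤ (ordAt (fun z => F (n + 1) z - F (n + 1) c) w).toNat := htoNat_mono hn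
    have h3 := le_antisymm h1 h2
    rw [← h3, ENat.coe_toNat (hfinN n)]
  have hLm0 : L ≤ m0 := by
    have h1 := hbound N
    rw [hstab N le_rfl] at h1
    exact_mod_cast h1
  rcases eq_or_ne L m0 with hLeq | hLne
  · refine ⟨hmono, fun n => le_trans (hbound n) (le_of_eq hm0), ⟨N, fun n hn => ?_⟩⟩
    rw [hstab n hn, hLeq]
    exact hm0
  · exfalso
    have hLlt : L < m0 := lt_of_le_of_ne hLm0 hLne
    -- choose a radius around w
    have hev : ∀ᶠ z in 𝓝[≠] w, Flim z - Flim c ≠ 0 := by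
      rcases (hUlanal w hw).eventually_eq_zero_or_eventually_ne_zero with h | h
      · exact absurd h hUlne
      · exact h
    rw [eventually_nhdsWithin_iff, Metric.eventually_nhds_iff] at hev
    obtain ⟨ε1, hε1, hball1⟩ := hev
    obtain ⟨ε2, hε2, hball2⟩ := Metric.isOpen_iff.mp hD w hw
    set r := min ε1 ε2 / 2 with hrdef
    have hr : 0 < r := by positivity
    have hrlt : r < min ε1 ε2 := half_lt_self (by positivity)
    have hrD : closedBall w r ⊆ unitDisk := by
      intro z hz
      apply hball2
      have := mem_closedBall.mp hz
      exact mem_ball.mpr (lt_of_le_of_lt this (hrlt.trans_le (min_le_right _ _)))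
    have hrne : ∀ z ∈ closedBall w r, z ≠ w → Flim z - Flim c ≠ 0 := by
      intro z hz hzw
      apply hball1
      · exact lt_of_le_of_lt (mem_closedBall.mp hz) (hrlt.trans_le (min_le_left _ _))
      · simpa using hzw
    -- zeros persist along the sequence
    have hpers : ∀ z ∈ unitDisk, ∀ n, F n z - F n c = 0 → Flim z - Flim c = 0 := by
      intro z hz n h0
      have hstep : ∀ k, n ≤ k → F k z - F k c = 0 := by
        intro k hk
        induction k, hk using Nat.le_induction with
        | base => exact h0
        | succ k hk ih =>
          obtain ⟨v, _, hveq⟩ := hV k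
          have h1 : F (k + 1) z - F (k + 1) c = (F k z - F k c) * v z := congrFun hveq z
          rw [h1, ih, zero_mul]
      have h1 : Tendsto (fun k => F k z - F k c) atTop (𝓝 0) := by
        apply Tendsto.congr' _ tendsto_const_nhds
        filter_upwards [eventually_ge_atTop n] with k hk using (hstep k hk).symm
      exact tendsto_nhds_unique (hptU z hz) h1
    have hno : ∀ n, ∀ z ∈ closedBall w r, z ≠ w → F n z - F n c ≠ 0 := by
      intro n z hz hzw h0
      exact hrne z hz hzw (hpers z (hrD hz) n h0)
    -- minimum of the limit on the sphere
    have hsub1 : sphere w r ⊆ closedBall w r := sphere_subset_closedBall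
    have hcont : ContinuousOn (fun z => ‖Flim z - Flim c‖) (sphere w r) :=
      ((hUldiff.continuousOn).mono (hsub1.trans hrD)).norm
    obtain ⟨z0, hz0s, hz0min⟩ := (isCompact_sphere w r).exists_isMinOn
      (NormedSpace.sphere_nonempty.mpr hr.le) hcont
    have hz0w : z0 ≠ w := by
      intro h
      have h1 := mem_sphere.mp hz0s
      rw [h, _root_.dist_self] at h1
      exact hr.ne h1
    have hdpos : 0 < ‖Flim z0 - Flim c‖ :=
      norm_pos_iff.mpr (hrne z0 (hsub1 hz0s) hz0w)
    set δ := ‖Flim z0 - Flim c‖ with hddef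
    -- uniform convergence on the sphere
    have hus : TendstoUniformlyOn (fun n => fun z => F n z - F n c)
        (fun z => Flim z - Flim c) atTop (sphere w r) :=
      (tendstoLocallyUniformlyOn_iff_tendstoUniformlyOn_of_compact (isCompact_sphere w r)).mp
        (hconvU.mono (hsub1.trans hrD))
    have husev : ∀ᶠ n in atTop, ∀ z ∈ sphere w r, δ / 2 ≤ ‖F n z - F n c‖ := by
      filter_upwards [(Metric.tendstoUniformlyOn_iff.mp hus) (δ / 2) (by positivity)]
        with n hn z hzs
      have h1 : dist (Flim z - Flim c) (F n z - F n c) < δ / 2 := hn z hzs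
      rw [dist_eq_norm] at h1
      have h2 : δ ≤ ‖Flim z - Flim c‖ := hz0min hzs
      have h3 := norm_sub_norm_le (Flim z - Flim c) (F n z - F n c)
      linarith
    have hpos : 0 < δ / 2 / r ^ L := by positivity
    -- the L-th derivative of the limit vanishes at w
    have hLD : iteratedDeriv L (fun z => Flim z - Flim c) w = 0 := hm0'.2 L hLlt
    have hHcv : Tendsto (fun n =>
        ((L : ℕ)! : ℂ)⁻¹ * iteratedDeriv L (fun z => F (n + 1) z - F (n + 1) c) w)
        atTop (𝓝 0) := by
      have h1 := ((hdW L).comp (tendsto_add_atTop_nat 1)).const_mul (((L : ℕ)! : ℂ)⁻¹)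
      rw [hLD, mul_zero] at h1
      exact h1
    -- main estimate from the maximum principle
    have hkey : ∀ᶠ n in atTop, δ / 2 / r ^ L ≤
        ‖((L : ℕ)! : ℂ)⁻¹ * iteratedDeriv L (fun z => F (n + 1) z - F (n + 1) c) w‖ := by
      filter_upwards [(tendsto_add_atTop_nat 1).eventually husev, eventually_ge_atTop N]
        with n hnsphere hnN
      have hord' := ordAt_eq_coe_iff.mp (hstab n hnN)
      have hanal : AnalyticAt ℂ (fun z => F (n + 1) z - F (n + 1) c) w :=
        (hUanal (n + 1)) w hw
      have hval : (swap dslope w)^[L] (fun z => F (n + 1) z - F (n + 1) c) w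
          = ((L : ℕ)! : ℂ)⁻¹ * iteratedDeriv L (fun z => F (n + 1) z - F (n + 1) c) w :=
        iterDslope_apply_self hanal L
      rw [← hval]
      have hvne : (swap dslope w)^[L] (fun z => F (n + 1) z - F (n + 1) c) w ≠ 0 := by
        rw [hval]
        exact mul_ne_zero (inv_ne_zero (by exact_mod_cast L.factorial_ne_zero)) hord'.1
      have hform := iterDslope_apply_ne hanal L hord'.2
      have hHdiff : DifferentiableOn ℂ
          ((swap dslope w)^[L] (fun z => F (n + 1) z - F (n + 1) c)) unitDisk :=
        iterDslope_diffOn hD hw (hUdiff (n + 1)) L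
      have hHne : ∀ z ∈ closedBall w r,
          (swap dslope w)^[L] (fun z => F (n + 1) z - F (n + 1) c) z ≠ 0 := by
        intro z hz
        rcases eq_or_ne z w with rfl | hzw
        · exact hvne
        · rw [hform z hzw]
          exact div_ne_zero (hno (n + 1) z hz hzw) (pow_ne_zero _ (sub_ne_zero.mpr hzw))
      have hinv : DiffContOnCl ℂ
          (fun z => ((swap dslope w)^[L] (fun z => F (n + 1) z - F (n + 1) c) z)⁻¹)
          (ball w r) := by
        constructor
        · intro z hz
          have hzD : z ∈ unitDisk := hrD (ball_subset_closedBall hz)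
          exact ((hHdiff.differentiableAt (hD.mem_nhds hzD)).inv
            (hHne z (ball_subset_closedBall hz))).differentiableWithinAt
        · rw [closure_ball w hr.ne']
          exact (hHdiff.continuousOn.mono hrD).inv₀ hHne
      have hbnd : ∀ z ∈ frontier (ball w r),
          ‖((swap dslope w)^[L] (fun z => F (n + 1) z - F (n + 1) c) z)⁻¹‖
            ≤ (δ / 2 / r ^ L)⁻¹ := by
        rw [frontier_ball w hr.ne']
        intro z hzs
        have hzw : z ≠ w := by
          intro h
          have h1 := mem_sphere.mp hzs
          rw [h, _root_.dist_self] at h1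
          exact hr.ne h1
        have hzr : ‖z - w‖ = r := by
          rw [← dist_eq_norm]
          exact mem_sphere.mp hzs
        have h2 : ‖(z - w) ^ L‖ = r ^ L := by rw [norm_pow, hzr]
        have h3 : δ / 2 ≤ ‖F (n + 1) z - F (n + 1) c‖ := hnsphere z hzs
        rw [norm_inv, hform z hzw, norm_div, h2]
        apply inv_anti₀ hpos
        gcongr
      have hmax := Complex.norm_le_of_forall_mem_frontier_norm_le isBounded_ball hinv hbnd
        (by rw [closure_ball w hr.ne']; exact mem_closedBall_self hr.le)
      rw [norm_inv] at hmax
      have h5 : 0 < ‖(swap dslope w)^[L] (fun z => F (n + 1) z - F (n + 1) c) w‖ :=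
        norm_pos_iff.mpr hvne
      exact (inv_le_inv₀ h5 hpos).mp hmax
    -- contradiction
    have hnorm0 : Tendsto (fun n =>
        ‖((L : ℕ)! : ℂ)⁻¹ * iteratedDeriv L (fun z => F (n + 1) z - F (n + 1) c) w‖)
        atTop (𝓝 0) := by
      have h1 := hHcv.norm
      simpa using h1
    obtain ⟨n, hge, hlt⟩ := (hkey.and (hnorm0.eventually_lt_const hpos)).exists
    linarith
end
end
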